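/- arXiv:2004.14854 — 3 statements merged into one kernel-verified Lean document; each statement's English description precedes it below -/
import Mathlib

section
/- For O = 2 outputs and S = 3 inputs, the number of equivalence classes of deterministic strategies of length L under relabeling of outcomes and of measurement settings equals 2^{(L−1)/2 + 3(3^L − 3)/4 − 1} + (1/6)(2^{3(3^L−3)/2} + 2^{(3^L−3)/2 + 1}). -/
/-- A node of the complete ternary tree of depth `L-1`: an input history of
length `l < L`, inputs labelled by `Fin 3`. -/
abbrev TerNode (L : ℕ) := (l : Fin L) × (Fin (l : ℕ) → Fin 3)

/-- A deterministic strategy for `O = 2`, `S = 3`: each node carries a tuple in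
`{0,1}^3`. -/
abbrev DetStrategy23 (L : ℕ) := TerNode L → (Fin 3 → ZMod 2)

/-- Relabeling equivalence for `O = 2`, `S = 3`: `s'` is obtained from `s` by a
permutation `π` of the three settings (permuting tuple components and tree
branches simultaneously) together with outcome flips `c`, one per setting,
applied uniformly at all nodes. -/
def REquiv23 (L : ℕ) (s s' : DetStrategy23 L) : Prop :=
  ∃ (c : Fin 3 → ZMod 2) (π : Equiv.Perm (Fin 3)),
    ∀ (l : Fin L) (xs : Fin (l : ℕ) → Fin 3) (i : Fin 3),
      s' ⟨l, xs⟩ i = s ⟨l, fun j => π (xs j)⟩ (π i) + c i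

lemma z2aa : ∀ a : ZMod 2, a + a = 0 := by decide
lemma z2shift {a b c : ZMod 2} (h : a = b + c) : b = a + c := by subst h; rw [add_assoc, z2aa, add_zero]

set_option synthInstance.maxHeartbeats 1000000 in
structure RG where
  c : Fin 3 → ZMod 2
  p : Equiv.Perm (Fin 3)
  deriving DecidableEq

@[ext] lemma RG.ext' {a b : RG} (h1 : a.c = b.c) (h2 : a.p = b.p) : a = b := by
  cases a; cases b; simp_all

def RG.prodEquiv : ((Fin 3 → ZMod 2) × Equiv.Perm (Fin 3)) ≃ RG where
  toFun x := ⟨x.1, x.2⟩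
  invFun g := (g.c, g.p)
  left_inv _ := rfl
  right_inv _ := rfl

instance : Fintype RG := Fintype.ofEquiv _ RG.prodEquiv

instance : Group RG where
  mul a b := ⟨a.c + fun i => b.c (a.p i), b.p * a.p⟩
  one := ⟨0, 1⟩
  inv a := ⟨fun i => a.c (a.p⁻¹ i), a.p⁻¹⟩
  mul_assoc a b c :=
    RG.ext'
      (funext fun i => by
        show (a.c + fun i => b.c (a.p i)) i + c.c ((b.p * a.p) i) =
          a.c i + ((b.c + fun i => c.c (b.p i)) (a.p i))
        simp [Equiv.Perm.mul_apply, add_assoc])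
      ((mul_assoc c.p b.p a.p).symm)
  one_mul a :=
    RG.ext'
      (funext fun i => by
        show (0 : Fin 3 → ZMod 2) i + a.c ((1 : Equiv.Perm (Fin 3)) i) = a.c i; simp)
      (mul_one a.p)
  mul_one a :=
    RG.ext'
      (funext fun i => by
        show a.c i + (0 : Fin 3 → ZMod 2) (a.p i) = a.c i; simp)
      (one_mul a.p)
  inv_mul_cancel a :=
    RG.ext'
      (funext fun i => by
        show a.c (a.p⁻¹ i) + a.c (a.p⁻¹ i) = (0 : Fin 3 → ZMod 2) i
        simp [z2aa])
      (mul_inv_cancel a.p)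

lemma RG.mul_def (a b : RG) : a * b = ⟨a.c + fun i => b.c (a.p i), b.p * a.p⟩ := rfl
lemma RG.one_def : (1 : RG) = ⟨0, 1⟩ := rfl

instance RG.act (L : ℕ) : MulAction RG (DetStrategy23 L) where
  smul g f := fun node i => f ⟨node.1, fun j => g.p (node.2 j)⟩ (g.p i) + g.c i
  one_smul f := by
    funext node i
    show f ⟨node.1, fun j => (1 : Equiv.Perm (Fin 3)) (node.2 j)⟩ ((1 : Equiv.Perm (Fin 3)) i)
        + (0 : Fin 3 → ZMod 2) i = f node i
    simp
  mul_smul a b f := by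
    funext node i
    show f ⟨node.1, fun j => (b.p * a.p) (node.2 j)⟩ ((b.p * a.p) i) + (a.c i + b.c (a.p i)) =
      (f ⟨(⟨node.1, fun j => a.p (node.2 j)⟩ : TerNode L).1,
          fun j => b.p ((⟨node.1, fun j => a.p (node.2 j)⟩ : TerNode L).2 j)⟩ (b.p (a.p i))
        + b.c (a.p i)) + a.c i
    simp [Equiv.Perm.mul_apply]; ring

set_option synthInstance.maxHeartbeats 1000000 in
lemma RG.smul_def {L : ℕ} (g : RG) (f : DetStrategy23 L) :
    g • f = fun node i => f ⟨node.1, fun j => g.p (node.2 j)⟩ (g.p i) + g.c i := rfl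

lemma requiv_iff_orbit {L : ℕ} (s s' : DetStrategy23 L) :
    REquiv23 L s s' ↔ s' ∈ MulAction.orbit RG s := by
  constructor
  · rintro ⟨c, π, h⟩
    exact ⟨RG.mk c π, by funext node i; obtain ⟨l, xs⟩ := node; exact (h l xs i).symm⟩
  · rintro ⟨g, rfl⟩
    exact ⟨g.c, g.p, fun l xs i => rfl⟩

noncomputable def quotEquiv (L : ℕ) :
    Quot (REquiv23 L) ≃ Quotient (MulAction.orbitRel RG (DetStrategy23 L)) := by
  apply Quot.congrRight
  intro a b
  rw [requiv_iff_orbit]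
  show _ ↔ MulAction.orbitRel RG (DetStrategy23 L) a b
  rw [MulAction.orbitRel_apply]
  constructor
  · rintro ⟨g, rfl⟩; exact ⟨g⁻¹, inv_smul_smul g a⟩
  · rintro ⟨g, rfl⟩; exact ⟨g⁻¹, inv_smul_smul g b⟩

lemma z2aa' : ∀ a : ZMod 2, a + a = 0 := by decide
lemma z2c : ∀ a b : ZMod 2, a + b + b = a := by decide
lemma z2d : ∀ a b : ZMod 2, a = a + b → b = 0 := by decide

set_option linter.unusedSectionVars false
section Count
variable {α : Type*} [Fintype α] [DecidableEq α]

lemma count_empty_fix (e : Equiv.Perm α) (c : α → ZMod 2) (a : α) (ha : e a = a)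
    (hca : c a ≠ 0) : IsEmpty {f : α → ZMod 2 // ∀ x, f (e x) = f x + c x} := by
  constructor
  rintro ⟨f, hf⟩
  have := hf a
  rw [ha] at this
  exact hca (z2d _ _ this)

lemma count_empty_invol (e : Equiv.Perm α) (he : ∀ x, e (e x) = x) (c : α → ZMod 2) (a : α)
    (hca : c (e a) ≠ c a) : IsEmpty {f : α → ZMod 2 // ∀ x, f (e x) = f x + c x} := by
  constructor
  rintro ⟨f, hf⟩
  have h1 := hf a
  have h2 := hf (e a)
  rw [he a, h1] at h2
  -- h2 : f a = f a + c a + c (e a)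
  have : c a + c (e a) = 0 := z2d _ _ (by rw [add_assoc] at h2; exact h2)
  revert hca this
  generalize c (e a) = u; generalize c a = v
  revert u v; decide

lemma count_empty_tri (e : Equiv.Perm α) (he : ∀ x, e (e (e x)) = x) (c : α → ZMod 2) (a : α)
    (hca : c a + c (e a) + c (e (e a)) ≠ 0) :
    IsEmpty {f : α → ZMod 2 // ∀ x, f (e x) = f x + c x} := by
  constructor
  rintro ⟨f, hf⟩
  have h1 := hf a
  have h2 := hf (e a)
  have h3 := hf (e (e a))
  rw [he a] at h3
  rw [h1] at h2
  rw [h2] at h3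
  -- h3 : f a = f a + c a + c (e a) + c (e (e a))
  apply hca
  exact z2d (f a) (c a + c (e a) + c (e (e a)))
    (by linear_combination h3)
end Count

section CountCore
variable {α : Type*} [Fintype α] [DecidableEq α]

lemma count_invol (e : Equiv.Perm α) (he : ∀ x, e (e x) = x) (c : α → ZMod 2)
    (hc : ∀ x, c (e x) = c x) (hfix : ∀ x, e x = x → c x = 0) (d : ℕ)
    (hd : Fintype.card α + Fintype.card {x // e x = x} = 2 * d) :
    Nat.card {f : α → ZMod 2 // ∀ x, f (e x) = f x + c x} = 2 ^ d := by
  classical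
  letI : LinearOrder α := LinearOrder.lift' (fun a => ((Fintype.equivFin α) a : ℕ))
    (fun a b h => (Fintype.equivFin α).injective (Fin.val_injective h))
  set D := {x : α // x ≤ e x} with hDdef
  have extpf : ∀ x : α, ¬ x ≤ e x → e x ≤ e (e x) := by
    intro x h; rw [he]; exact le_of_not_ge h
  set ext : (D → ZMod 2) → (α → ZMod 2) := fun g x =>
    if h : x ≤ e x then g ⟨x, h⟩ else g ⟨e x, extpf x h⟩ + c x with hext
  have cond_pf : ∀ g x, ext g (e x) = ext g x + c x := by
    intro g x
    by_cases hfx : e x = x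
    · rw [hfx, hfix x hfx, add_zero]
    by_cases hx : x ≤ e x
    · have hlt : ¬ e x ≤ e (e x) := by
        rw [he]; exact not_le.mpr (lt_of_le_of_ne hx (fun h => hfx h.symm))
      rw [hext]
      simp only []
      rw [dif_neg hlt, dif_pos hx]
      have : (⟨e (e x), extpf (e x) hlt⟩ : D) = ⟨x, hx⟩ := Subtype.ext (he x)
      rw [this, hc]
    · have h' : e x ≤ e (e x) := extpf x hx
      rw [hext]
      simp only []
      rw [dif_pos h', dif_neg hx, z2c]
  have Φ : {f : α → ZMod 2 // ∀ x, f (e x) = f x + c x} ≃ (D → ZMod 2) :=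
    { toFun := fun f x => f.1 x.1
      invFun := fun g => ⟨ext g, cond_pf g⟩
      left_inv := by
        rintro ⟨f, hf⟩
        apply Subtype.ext
        funext x
        show ext (fun y => f y.1) x = f x
        rw [hext]; simp only []
        by_cases hx : x ≤ e x
        · rw [dif_pos hx]
        · rw [dif_neg hx]
          show f (e x) + c x = f x
          rw [hf x, z2c]
      right_inv := by
        intro g; funext x
        show ext g x.1 = g x
        rw [hext]; simp only []
        rw [dif_pos x.2] }
  rw [Nat.card_congr Φ]
  have hcardD : Fintype.card D = d := by
    have hA : (Finset.univ.filter (fun x : α => x ≤ e x)).card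
        = (Finset.univ.filter (fun x : α => x < e x)).card
          + (Finset.univ.filter (fun x : α => e x = x)).card := by
      rw [← Finset.card_union_of_disjoint]
      · congr 1
        ext x
        simp only [Finset.mem_filter, Finset.mem_union, Finset.mem_univ, true_and]
        constructor
        · intro h; rcases lt_or_eq_of_le h with h | h
          · exact Or.inl h
          · exact Or.inr h.symm
        · rintro (h | h); exacts [le_of_lt h, le_of_eq h.symm]
      · rw [Finset.disjoint_left]
        intro x hx hx2
        simp only [Finset.mem_filter, Finset.mem_univ, true_and] at hx hx2
        rw [hx2] at hx
        exact lt_irrefl x hx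
    have hsplit : (Finset.univ.filter (fun x : α => x ≤ e x)).card
        + (Finset.univ.filter (fun x : α => ¬ x ≤ e x)).card = Fintype.card α :=
      Finset.card_filter_add_card_filter_not _
    have hBA : (Finset.univ.filter (fun x : α => ¬ x ≤ e x)).card
        = (Finset.univ.filter (fun x : α => x < e x)).card := by
      refine Finset.card_bij' (fun x _ => e x) (fun x _ => e x) ?_ ?_ ?_ ?_
      · intro x hx
        simp only [Finset.mem_filter, Finset.mem_univ, true_and, not_le] at hx ⊢
        rw [he]; exact hx
      · intro x hx
        simp only [Finset.mem_filter, Finset.mem_univ, true_and, not_le] at hx ⊢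
        rw [he]; exact hx
      · intro x _; exact he x
      · intro x _; exact he x
    have hfixcard : Fintype.card {x // e x = x}
        = (Finset.univ.filter (fun x : α => e x = x)).card := Fintype.card_subtype _
    have hDcard : Fintype.card D
        = (Finset.univ.filter (fun x : α => x ≤ e x)).card := Fintype.card_subtype _
    omega
  rw [Nat.card_eq_fintype_card, Fintype.card_fun, ZMod.card, hcardD]
end CountCore

section CountTri
variable {α : Type*} [Fintype α] [DecidableEq α]

lemma count_tri (e : Equiv.Perm α) (he : ∀ x, e (e (e x)) = x) (hfree : ∀ x, e x ≠ x)
    (c : α → ZMod 2) (hc : ∀ x, c x + c (e x) + c (e (e x)) = 0) (d : ℕ)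
    (hd : Fintype.card α = 3 * d) :
    Nat.card {f : α → ZMod 2 // ∀ x, f (e x) = f x + c x} = 2 ^ d := by
  classical
  letI : LinearOrder α := LinearOrder.lift' (fun a => ((Fintype.equivFin α) a : ℕ))
    (fun a b h => (Fintype.equivFin α).injective (Fin.val_injective h))
  have hne2 : ∀ x, e (e x) ≠ x := by
    intro x h
    have h2 := congrArg e h
    rw [he] at h2
    exact hfree x h2.symm
  have cover : ∀ x : α, (x ≤ e x ∧ x ≤ e (e x)) ∨ (e x ≤ e (e x) ∧ e x ≤ x)
      ∨ (e (e x) ≤ x ∧ e (e x) ≤ e x) := by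
    intro x
    rcases le_total x (e x) with h1 | h1 <;> rcases le_total (e x) (e (e x)) with h2 | h2 <;>
      rcases le_total x (e (e x)) with h3 | h3 <;>
      first
        | exact Or.inl ⟨h1, h3⟩
        | exact Or.inl ⟨h1, le_trans h1 h2⟩
        | exact Or.inr (Or.inl ⟨h2, h1⟩)
        | exact Or.inr (Or.inr ⟨h3, h2⟩)
        | exact Or.inr (Or.inr ⟨le_trans h2 h1, h2⟩)
  have dis1 : ∀ x : α, (x ≤ e x ∧ x ≤ e (e x)) → ¬ (e x ≤ e (e x) ∧ e x ≤ x) :=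
    fun x hx h => hfree x (le_antisymm h.2 hx.1)
  have dis2 : ∀ x : α, (x ≤ e x ∧ x ≤ e (e x)) → ¬ (e (e x) ≤ x ∧ e (e x) ≤ e x) :=
    fun x hx h => hne2 x (le_antisymm h.1 hx.2)
  have dis3 : ∀ x : α, (e x ≤ e (e x) ∧ e x ≤ x) → ¬ (e (e x) ≤ x ∧ e (e x) ≤ e x) :=
    fun x hx h => hfree x (e.injective (le_antisymm h.2 hx.1))
  set D := {x : α // x ≤ e x ∧ x ≤ e (e x)} with hDdef
  set ext : (D → ZMod 2) → (α → ZMod 2) := fun g x =>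
    if h1 : x ≤ e x ∧ x ≤ e (e x) then g ⟨x, h1⟩
    else if h2 : e (e x) ≤ x ∧ e (e x) ≤ e x then
      g ⟨e (e x), by simp only [he]; exact h2⟩ + c (e (e x))
    else
      g ⟨e x, by
        simp only [he]
        rcases cover x with h | h | h
        · exact absurd h h1
        · exact h
        · exact absurd h h2⟩ + c (e x) + c (e (e x)) with hext
  have eval1 : ∀ g (x : α) (h : x ≤ e x ∧ x ≤ e (e x)), ext g x = g ⟨x, h⟩ := by
    intro g x h; rw [hext]; simp only []; rw [dif_pos h]
  have eval2 : ∀ g (x : α) (h2 : e (e x) ≤ x ∧ e (e x) ≤ e x)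
      (pf : e (e x) ≤ e (e (e x)) ∧ e (e x) ≤ e (e (e (e x)))),
      ext g x = g ⟨e (e x), pf⟩ + c (e (e x)) := by
    intro g x h2 pf
    rw [hext]; simp only []
    rw [dif_neg (dis2 x · h2), dif_pos h2]
  have eval3 : ∀ g (x : α) (h1 : ¬ (x ≤ e x ∧ x ≤ e (e x)))
      (h2 : ¬ (e (e x) ≤ x ∧ e (e x) ≤ e x))
      (pf : e x ≤ e (e x) ∧ e x ≤ e (e (e x))),
      ext g x = g ⟨e x, pf⟩ + c (e x) + c (e (e x)) := by
    intro g x h1 h2 pf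
    rw [hext]; simp only []
    rw [dif_neg h1, dif_neg h2]
  have cond_pf : ∀ g x, ext g (e x) = ext g x + c x := by
    intro g x
    rcases cover x with hA | hB | hC
    · -- x is the minimum of its orbit
      rw [eval1 g x hA]
      have h2 : e (e (e x)) ≤ e x ∧ e (e (e x)) ≤ e (e x) := by
        simp only [he]; exact hA
      rw [eval2 g (e x) h2 (by simp only [he]; exact hA)]
      have hsub : (⟨e (e (e x)), by simp only [he]; exact hA⟩ : D) = ⟨x, hA⟩ :=
        Subtype.ext (he x)
      rw [hsub, he]
    · -- e x is the minimum
      have hx1 : ¬ (x ≤ e x ∧ x ≤ e (e x)) := fun h => dis1 x h hB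
      have hx2 : ¬ (e (e x) ≤ x ∧ e (e x) ≤ e x) := fun h => dis3 x hB h
      have pf : e x ≤ e (e x) ∧ e x ≤ e (e (e x)) := by simp only [he]; exact hB
      rw [eval3 g x hx1 hx2 pf]
      have h1 : e x ≤ e (e x) ∧ e x ≤ e (e (e x)) := pf
      rw [eval1 g (e x) h1]
      have key : ∀ (a u v w : ZMod 2), u + v + w = 0 → a = a + v + w + u := by decide
      exact key (g ⟨e x, pf⟩) (c x) (c (e x)) (c (e (e x))) (hc x)
    · -- e (e x) is the minimum
      have hx1 : ¬ (x ≤ e x ∧ x ≤ e (e x)) := fun h => dis2 x h hC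
      rw [eval2 g x hC (by simp only [he]; exact hC)]
      have hy1 : ¬ (e x ≤ e (e x) ∧ e x ≤ e (e (e x))) := by
        simp only [he]; exact fun h => dis3 x h hC
      have hy2 : ¬ (e (e (e x)) ≤ e x ∧ e (e (e x)) ≤ e (e x)) := by
        simp only [he]; exact fun h => dis2 x h hC
      have pf : e (e x) ≤ e (e (e x)) ∧ e (e x) ≤ e (e (e (e x))) := by
        simp only [he]; exact hC
      rw [eval3 g (e x) hy1 hy2 pf]
      rw [show c (e (e (e x))) = c x from congrArg c (he x)]
  have Φ : {f : α → ZMod 2 // ∀ x, f (e x) = f x + c x} ≃ (D → ZMod 2) :=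
    { toFun := fun f x => f.1 x.1
      invFun := fun g => ⟨ext g, cond_pf g⟩
      left_inv := by
        rintro ⟨f, hf⟩
        apply Subtype.ext
        funext x
        show ext (fun y => f y.1) x = f x
        rcases cover x with hA | hB | hC
        · exact eval1 (fun y => f y.1) x hA
        · have hx1 : ¬ (x ≤ e x ∧ x ≤ e (e x)) := fun h => dis1 x h hB
          have hx2 : ¬ (e (e x) ≤ x ∧ e (e x) ≤ e x) := fun h => dis3 x hB h
          refine (eval3 (fun y => f y.1) x hx1 hx2 (by simp only [he]; exact hB)).trans ?_
          show f (e x) + c (e x) + c (e (e x)) = f x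
          have k2 := hf (e (e x))
          rw [he] at k2
          rw [hf (e x)] at k2
          exact k2.symm
        · refine (eval2 (fun y => f y.1) x hC (by simp only [he]; exact hC)).trans ?_
          show f (e (e x)) + c (e (e x)) = f x
          have k2 := hf (e (e x))
          rw [he] at k2
          exact k2.symm
      right_inv := by
        intro g; funext x
        exact eval1 g x.1 x.2 }
  rw [Nat.card_congr Φ]
  -- cardinality of D
  have hF2 : (Finset.univ.filter (fun x : α => e x ≤ e (e x) ∧ e x ≤ x)).card
      = (Finset.univ.filter (fun x : α => x ≤ e x ∧ x ≤ e (e x))).card := by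
    refine Finset.card_bij' (fun x _ => e x) (fun x _ => e (e x)) ?_ ?_ ?_ ?_
    · intro x hx
      simp only [Finset.mem_filter, Finset.mem_univ, true_and, he] at hx ⊢
      exact hx
    · intro x hx
      simp only [Finset.mem_filter, Finset.mem_univ, true_and, he] at hx ⊢
      exact hx
    · intro x _; exact he x
    · intro x _; exact he x
  have hF3 : (Finset.univ.filter (fun x : α => e (e x) ≤ x ∧ e (e x) ≤ e x)).card
      = (Finset.univ.filter (fun x : α => x ≤ e x ∧ x ≤ e (e x))).card := by
    refine Finset.card_bij' (fun x _ => e (e x)) (fun x _ => e x) ?_ ?_ ?_ ?_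
    · intro x hx
      simp only [Finset.mem_filter, Finset.mem_univ, true_and, he] at hx ⊢
      exact hx
    · intro x hx
      simp only [Finset.mem_filter, Finset.mem_univ, true_and, he] at hx ⊢
      exact hx
    · intro x _; exact he x
    · intro x _; exact he x
  have hpart : (Finset.univ.filter (fun x : α => x ≤ e x ∧ x ≤ e (e x))).card
      + ((Finset.univ.filter (fun x : α => e x ≤ e (e x) ∧ e x ≤ x)).card
      + (Finset.univ.filter (fun x : α => e (e x) ≤ x ∧ e (e x) ≤ e x)).card)
      = Fintype.card α := by
    rw [← Finset.card_union_of_disjoint, ← Finset.card_union_of_disjoint]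
    · rw [← Finset.card_univ]
      congr 1
      ext x
      simp only [Finset.mem_union, Finset.mem_filter, Finset.mem_univ, true_and, iff_true]
      rcases cover x with h | h | h
      · exact Or.inl h
      · exact Or.inr (Or.inl h)
      · exact Or.inr (Or.inr h)
    · rw [Finset.disjoint_left]
      intro x hx hx2
      simp only [Finset.mem_union, Finset.mem_filter, Finset.mem_univ, true_and] at hx hx2
      rcases hx2 with h | h
      · exact dis1 x hx h
      · exact dis2 x hx h
    · rw [Finset.disjoint_left]
      intro x hx hx2
      simp only [Finset.mem_filter, Finset.mem_univ, true_and] at hx hx2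
      exact dis3 x hx hx2
  have hDcard : Fintype.card D = d := by
    have hDc : Fintype.card D
        = (Finset.univ.filter (fun x : α => x ≤ e x ∧ x ≤ e (e x))).card :=
      Fintype.card_subtype _
    omega
  rw [Nat.card_eq_fintype_card, Fintype.card_fun, ZMod.card, hDcard]
end CountTri

lemma z2shift' {a b c : ZMod 2} (h : a = b + c) : a + c = b := by
  rw [h, add_assoc, z2aa, add_zero]

def Emap (L : ℕ) (p : Equiv.Perm (Fin 3)) : Equiv.Perm (TerNode L × Fin 3) where
  toFun a := (⟨a.1.1, fun j => p (a.1.2 j)⟩, p a.2)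
  invFun a := (⟨a.1.1, fun j => p⁻¹ (a.1.2 j)⟩, p⁻¹ a.2)
  left_inv := by rintro ⟨⟨l, xs⟩, i⟩; simp
  right_inv := by rintro ⟨⟨l, xs⟩, i⟩; simp

lemma Emap_invol {L : ℕ} (p : Equiv.Perm (Fin 3)) (hp2 : ∀ i, p (p i) = i) :
    ∀ a, Emap L p (Emap L p a) = a := by
  rintro ⟨⟨l, xs⟩, i⟩
  simp [Emap, hp2]

lemma Emap_tri {L : ℕ} (p : Equiv.Perm (Fin 3)) (hp3 : ∀ i, p (p (p i)) = i) :
    ∀ a, Emap L p (Emap L p (Emap L p a)) = a := by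
  rintro ⟨⟨l, xs⟩, i⟩
  simp [Emap, hp3]

set_option synthInstance.maxHeartbeats 1000000 in
def fixSubEquiv (L : ℕ) (g : RG) :
    (MulAction.fixedBy (DetStrategy23 L) g) ≃
      {F : TerNode L × Fin 3 → ZMod 2 // ∀ a, F (Emap L g.p a) = F a + g.c a.2} where
  toFun f := ⟨fun a => f.1 a.1 a.2, by
    intro a
    have hf : g • f.1 = f.1 := f.2
    rw [RG.smul_def] at hf
    have h2 := congrFun (congrFun hf a.1) a.2
    exact z2shift h2.symm⟩
  invFun F := ⟨fun node i => F.1 (node, i), by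
    show g • _ = _
    rw [RG.smul_def]
    funext node i
    exact z2shift' (F.2 (node, i))⟩
  left_inv f := Subtype.ext rfl
  right_inv F := Subtype.ext rfl

lemma card_node (L : ℕ) : Fintype.card (TerNode L) = ∑ l ∈ Finset.range L, 3 ^ l := by
  rw [Fintype.card_sigma]
  have h : ∀ l : Fin L, Fintype.card (Fin (l : ℕ) → Fin 3) = 3 ^ (l : ℕ) := by
    intro l; rw [Fintype.card_fun]; simp
  rw [Finset.sum_congr rfl (fun l _ => h l)]
  exact Fin.sum_univ_eq_sum_range _ _

lemma card_coord (L : ℕ) :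
    Fintype.card (TerNode L × Fin 3) = 3 * ∑ l ∈ Finset.range L, 3 ^ l := by
  rw [Fintype.card_prod, card_node]
  simp [mul_comm]

def rootN {L : ℕ} (hL : 1 ≤ L) : TerNode L := ⟨⟨0, hL⟩, fun j => j.elim0⟩

lemma root_fix {L : ℕ} (hL : 1 ≤ L) (q : Equiv.Perm (Fin 3)) (i : Fin 3) (h : q i = i) :
    Emap L q (rootN hL, i) = (rootN hL, i) := by
  show ((⟨(⟨0, hL⟩ : Fin L), fun j => q ((rootN hL).2 j)⟩ : TerNode L), q i)
      = ((⟨(⟨0, hL⟩ : Fin L), (rootN hL).2⟩ : TerNode L), i)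
  rw [h]
  congr 1
  · congr 1
    funext j
    exact j.elim0

def fixSwapEquiv (L : ℕ) (p : Equiv.Perm (Fin 3)) (t : Fin 3) (hpt : ∀ i, p i = i ↔ i = t) :
    {a : TerNode L × Fin 3 // Emap L p a = a} ≃ Fin L where
  toFun a := a.1.1.1
  invFun l := ⟨((⟨l, fun _ => t⟩ : TerNode L), t), by
    have h : p t = t := (hpt t).mpr rfl
    show ((⟨l, fun _ => p t⟩ : TerNode L), p t) = ((⟨l, fun _ => t⟩ : TerNode L), t)
    rw [h]⟩
  left_inv := by
    rintro ⟨⟨⟨l, xs⟩, i⟩, h⟩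
    have h1 : (⟨l, fun j => p (xs j)⟩ : TerNode L) = ⟨l, xs⟩ := congrArg Prod.fst h
    have h2 : p i = i := congrArg Prod.snd h
    have hxs : ∀ j, p (xs j) = xs j := by
      have := eq_of_heq (Sigma.mk.inj_iff.mp h1).2
      exact fun j => congrFun this j
    apply Subtype.ext
    show ((⟨l, fun _ => t⟩ : TerNode L), t) = ((⟨l, xs⟩ : TerNode L), i)
    have hx : xs = fun _ => t := funext fun j => (hpt (xs j)).mp (hxs j)
    have hi : i = t := (hpt i).mp h2
    rw [hx, hi]
  right_inv l := rfl

lemma card_fix_swap (L : ℕ) (p : Equiv.Perm (Fin 3)) (t : Fin 3)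
    (hpt : ∀ i, p i = i ↔ i = t) :
    Fintype.card {a : TerNode L × Fin 3 // Emap L p a = a} = L := by
  rw [Fintype.card_congr (fixSwapEquiv L p t hpt), Fintype.card_fin]

section PerClass
variable {L : ℕ}

lemma nsum_def (L : ℕ) : True := trivial

set_option synthInstance.maxHeartbeats 1000000 in
lemma class_one (hL : 1 ≤ L) (c : Fin 3 → ZMod 2) :
    Nat.card (MulAction.fixedBy (DetStrategy23 L) (RG.mk c 1)) =
      if c = 0 then 2 ^ (3 * ∑ l ∈ Finset.range L, 3 ^ l) else 0 := by
  rw [Nat.card_congr (fixSubEquiv L (RG.mk c 1))]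
  by_cases hc : c = 0
  · subst hc
    rw [if_pos rfl]
    have hcond : ∀ F : TerNode L × Fin 3 → ZMod 2,
        ∀ a, F (Emap L (RG.mk 0 1).p a) = F a + (RG.mk (0 : Fin 3 → ZMod 2) 1).c a.2 := by
      intro F a
      show F a = F a + 0
      rw [add_zero]
    rw [Nat.card_congr (Equiv.subtypeUnivEquiv (fun F => hcond F))]
    rw [Nat.card_eq_fintype_card, Fintype.card_fun, ZMod.card, card_coord]
  · rw [if_neg hc]
    have hex : ∃ i, c i ≠ 0 := by
      by_contra h
      push_neg at h
      exact hc (funext h)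
    obtain ⟨i, hi⟩ := hex
    haveI := count_empty_fix (Emap L (1 : Equiv.Perm (Fin 3)))
      (fun a : TerNode L × Fin 3 => c a.2) (rootN hL, i) (root_fix hL 1 i rfl) hi
    exact Nat.card_of_isEmpty

set_option synthInstance.maxHeartbeats 1000000 in
lemma class_swap (hL : 1 ≤ L) (p : Equiv.Perm (Fin 3)) (t : Fin 3)
    (hp2 : ∀ i, p (p i) = i) (hpt : ∀ i, p i = i ↔ i = t)
    (c : Fin 3 → ZMod 2) (d : ℕ)
    (hd : 3 * (∑ l ∈ Finset.range L, 3 ^ l) + L = 2 * d) :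
    Nat.card (MulAction.fixedBy (DetStrategy23 L) (RG.mk c p)) =
      if ((∀ i, p i = i → c i = 0) ∧ ∀ i, c (p i) = c i) then 2 ^ d else 0 := by
  rw [Nat.card_congr (fixSubEquiv L (RG.mk c p))]
  have he := Emap_invol (L := L) p hp2
  by_cases hcond : (∀ i, p i = i → c i = 0) ∧ ∀ i, c (p i) = c i
  · rw [if_pos hcond]
    apply count_invol (Emap L p) he (fun a => c a.2)
    · intro a
      exact hcond.2 a.2
    · intro a ha
      exact hcond.1 a.2 (congrArg Prod.snd ha)
    · rw [card_coord, card_fix_swap L p t hpt]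
      exact hd
  · rw [if_neg hcond]
    by_cases h1 : ∀ i, c (p i) = c i
    · have h2 : ¬ ∀ i, p i = i → c i = 0 := fun h => hcond ⟨h, h1⟩
      push_neg at h2
      obtain ⟨i, hpi, hci⟩ := h2
      haveI := count_empty_fix (Emap L p) (fun a : TerNode L × Fin 3 => c a.2)
        (rootN hL, i) (root_fix hL p i hpi) hci
      exact Nat.card_of_isEmpty
    · push_neg at h1
      obtain ⟨i, hi⟩ := h1
      haveI := count_empty_invol (Emap L p) he (fun a : TerNode L × Fin 3 => c a.2)
        (rootN hL, i) hi
      exact Nat.card_of_isEmpty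

set_option synthInstance.maxHeartbeats 1000000 in
lemma class_cyc (hL : 1 ≤ L) (p : Equiv.Perm (Fin 3))
    (hp3 : ∀ i, p (p (p i)) = i) (hpf : ∀ i, p i ≠ i)
    (c : Fin 3 → ZMod 2) :
    Nat.card (MulAction.fixedBy (DetStrategy23 L) (RG.mk c p)) =
      if (∀ i, c i + c (p i) + c (p (p i)) = 0) then
        2 ^ (∑ l ∈ Finset.range L, 3 ^ l) else 0 := by
  rw [Nat.card_congr (fixSubEquiv L (RG.mk c p))]
  have he := Emap_tri (L := L) p hp3
  by_cases hcond : ∀ i, c i + c (p i) + c (p (p i)) = 0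
  · rw [if_pos hcond]
    apply count_tri (Emap L p) he
    · intro a ha
      exact hpf a.2 (congrArg Prod.snd ha)
    · intro a
      exact hcond a.2
    · rw [card_coord]
  · rw [if_neg hcond]
    push_neg at hcond
    obtain ⟨i, hi⟩ := hcond
    haveI := count_empty_tri (Emap L p) he (fun a : TerNode L × Fin 3 => c a.2)
      (rootN hL, i) hi
    exact Nat.card_of_isEmpty
end PerClass

def Pone (g : RG) : Prop := g.p = 1 ∧ g.c = 0
def Pswap (g : RG) : Prop :=
  (∃ t, ∀ i, g.p i = i ↔ i = t) ∧ (∀ i, g.p (g.p i) = i)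
    ∧ (∀ i, g.p i = i → g.c i = 0) ∧ (∀ i, g.c (g.p i) = g.c i)
def Pcyc (g : RG) : Prop :=
  (∀ i, g.p i ≠ i) ∧ (∀ i, g.c i + g.c (g.p i) + g.c (g.p (g.p i)) = 0)

instance : DecidablePred Pone := fun g =>
  decidable_of_iff (g.p = 1 ∧ g.c = 0) Iff.rfl
instance : DecidablePred Pswap := fun g =>
  decidable_of_iff ((∃ t, ∀ i, g.p i = i ↔ i = t) ∧ (∀ i, g.p (g.p i) = i)
    ∧ (∀ i, g.p i = i → g.c i = 0) ∧ (∀ i, g.c (g.p i) = g.c i)) Iff.rfl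
instance : DecidablePred Pcyc := fun g =>
  decidable_of_iff ((∀ i, g.p i ≠ i)
    ∧ (∀ i, g.c i + g.c (g.p i) + g.c (g.p (g.p i)) = 0)) Iff.rfl

lemma perm_classify : ∀ p : Equiv.Perm (Fin 3),
    p = 1 ∨ ((∀ i, p (p i) = i) ∧ (∃ t, ∀ i, p i = i ↔ i = t))
      ∨ ((∀ i, p (p (p i)) = i) ∧ ∀ i, p i ≠ i) := by decide

lemma cnt1 : (Finset.univ.filter Pone).card = 1 := by decide
lemma cnt2 : (Finset.univ.filter Pswap).card = 6 := by decide
lemma cnt3 : (Finset.univ.filter Pcyc).card = 8 := by decide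

set_option synthInstance.maxHeartbeats 1000000 in
lemma fix_formula {L : ℕ} (hL : 1 ≤ L) (d : ℕ)
    (hd : 3 * (∑ l ∈ Finset.range L, 3 ^ l) + L = 2 * d) (g : RG) :
    Nat.card (MulAction.fixedBy (DetStrategy23 L) g) =
      (if Pone g then 2 ^ (3 * ∑ l ∈ Finset.range L, 3 ^ l) else 0)
      + (if Pswap g then 2 ^ d else 0)
      + (if Pcyc g then 2 ^ (∑ l ∈ Finset.range L, 3 ^ l) else 0) := by
  obtain ⟨c, p⟩ := g
  rcases perm_classify p with hp | ⟨hp2, t, hpt⟩ | ⟨hp3, hpf⟩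
  · subst hp
    rw [class_one hL c]
    have hnsw : ¬ Pswap (RG.mk c 1) := by
      rintro ⟨⟨t, ht⟩, -, -, -⟩
      have h0 : (0 : Fin 3) = t := (ht 0).mp rfl
      have h1 : (1 : Fin 3) = t := (ht 1).mp rfl
      rw [← h1] at h0
      exact absurd h0 (by decide)
    have hncy : ¬ Pcyc (RG.mk c 1) := by
      rintro ⟨h, -⟩
      exact h 0 rfl
    rw [if_neg hnsw, if_neg hncy, add_zero, add_zero]
    congr 1
    · exact propext ⟨fun h => ⟨rfl, h⟩, fun h => h.2⟩
  · rw [class_swap hL p t hp2 hpt c d hd]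
    have hp1 : p ≠ 1 := by
      intro h
      have h0 : (0 : Fin 3) = t := (hpt 0).mp (by rw [h]; rfl)
      have h1 : (1 : Fin 3) = t := (hpt 1).mp (by rw [h]; rfl)
      rw [← h1] at h0
      exact absurd h0 (by decide)
    have hnone : ¬ Pone (RG.mk c p) := fun h => hp1 h.1
    have hncy : ¬ Pcyc (RG.mk c p) := fun h => h.1 t ((hpt t).mpr rfl)
    rw [if_neg hnone, if_neg hncy, add_zero, zero_add]
    congr 1
    · exact propext ⟨fun h => ⟨⟨t, hpt⟩, hp2, h.1, h.2⟩, fun h => ⟨h.2.2.1, h.2.2.2⟩⟩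
  · rw [class_cyc hL p hp3 hpf c]
    have hnone : ¬ Pone (RG.mk c p) := by
      rintro ⟨h, -⟩
      exact hpf 0 (by
        have : ({ c := c, p := p } : RG).p = p := rfl
        rw [this] at h
        rw [h]; rfl)

    have hnsw : ¬ Pswap (RG.mk c p) := by
      rintro ⟨⟨t, ht⟩, -, -, -⟩
      exact hpf t ((ht t).mpr rfl)
    rw [if_neg hnone, if_neg hnsw, zero_add, zero_add]
    congr 1
    · exact propext ⟨fun h => ⟨hpf, h⟩, fun h => h.2⟩

set_option synthInstance.maxHeartbeats 1000000 in
lemma burnside_eq {L : ℕ} :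
    (∑ g : RG, Nat.card (MulAction.fixedBy (DetStrategy23 L) g))
      = Nat.card (Quot (REquiv23 L)) * 48 := by
  classical
  letI : ∀ g : RG, Fintype (MulAction.fixedBy (DetStrategy23 L) g) :=
    fun g => Fintype.ofFinite _
  letI : Fintype (Quotient (MulAction.orbitRel RG (DetStrategy23 L))) := Fintype.ofFinite _
  have h := MulAction.sum_card_fixedBy_eq_card_orbits_mul_card_group RG (DetStrategy23 L)
  have hRG : Fintype.card RG = 48 := by
    rw [← Fintype.card_congr RG.prodEquiv]
    rw [Fintype.card_prod, Fintype.card_fun, ZMod.card, Fintype.card_perm, Fintype.card_fin]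
    rfl
  have hq : Nat.card (Quot (REquiv23 L))
      = Fintype.card (Quotient (MulAction.orbitRel RG (DetStrategy23 L))) := by
    rw [Nat.card_congr (quotEquiv L), Nat.card_eq_fintype_card]
  rw [hq, ← hRG, ← h]
  exact Finset.sum_congr rfl (fun g _ => Nat.card_eq_fintype_card)

set_option synthInstance.maxHeartbeats 1000000 in
lemma sum_eval {L : ℕ} (hL : 1 ≤ L) (d : ℕ)
    (hd : 3 * (∑ l ∈ Finset.range L, 3 ^ l) + L = 2 * d) :
    (∑ g : RG, Nat.card (MulAction.fixedBy (DetStrategy23 L) g))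
      = 2 ^ (3 * ∑ l ∈ Finset.range L, 3 ^ l) + 6 * 2 ^ d
        + 8 * 2 ^ (∑ l ∈ Finset.range L, 3 ^ l) := by
  classical
  rw [Finset.sum_congr rfl (fun g _ => fix_formula hL d hd g)]
  rw [Finset.sum_add_distrib, Finset.sum_add_distrib]
  rw [← Finset.sum_filter, ← Finset.sum_filter, ← Finset.sum_filter]
  rw [Finset.sum_const, Finset.sum_const, Finset.sum_const]
  rw [cnt1, cnt2, cnt3]
  simp [mul_comm]

lemma geom_sum (L : ℕ) : 2 * (∑ l ∈ Finset.range L, 3 ^ l) + 1 = 3 ^ L := by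
  induction L with
  | zero => simp
  | succ n ih =>
    rw [Finset.sum_range_succ, pow_succ]
    omega

lemma parity_sum (L : ℕ) : (3 * (∑ l ∈ Finset.range L, 3 ^ l) + L) % 2 = 0 := by
  induction L with
  | zero => simp
  | succ n ih =>
    rw [Finset.sum_range_succ]
    have h3 : 3 ^ n % 2 = 1 := by
      rw [Nat.pow_mod]
      simp
    omega

/-- For `O = 2` outputs and `S = 3` inputs, the number of equivalence classes of
deterministic strategies of length `L` under relabeling of outcomes and of
measurement settings equals
`2^((L-1)/2 + 3(3^L-3)/4 - 1) + (1/6)(2^(3(3^L-3)/2) + 2^((3^L-3)/2 + 1))`. -/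
theorem card_RE_classes_23 (L : ℕ) (hL : 1 ≤ L) :
    (Nat.card (Quot (REquiv23 L)) : ℝ) =
      2 ^ ((L - 1 : ℝ) / 2 + 3 * ((3 : ℝ) ^ L - 3) / 4 - 1) +
      (1 / 6) * (2 ^ (3 * ((3 : ℝ) ^ L - 3) / 2) +
                 2 ^ (((3 : ℝ) ^ L - 3) / 2 + 1)) := by

  have hpar := parity_sum L
  set n := ∑ l ∈ Finset.range L, 3 ^ l with hn
  obtain ⟨d, hd⟩ : ∃ d, 3 * n + L = 2 * d := ⟨(3 * n + L) / 2, by omega⟩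
  have hmain := (burnside_eq (L := L)).symm.trans (sum_eval hL d hd)
  have hR : (Nat.card (Quot (REquiv23 L)) : ℝ) * 48
      = 2 ^ (3 * n) + 6 * 2 ^ d + 8 * 2 ^ n := by exact_mod_cast hmain
  have h3L : ((3 : ℝ) ^ L) = 2 * (n : ℝ) + 1 := by
    have := geom_sum L
    exact_mod_cast this.symm
  have hdR : (2 : ℝ) * (d : ℝ) = 3 * (n : ℝ) + (L : ℝ) := by exact_mod_cast hd.symm
  have e1 : (L - 1 : ℝ) / 2 + 3 * ((3 : ℝ) ^ L - 3) / 4 - 1 = (d : ℝ) - 3 := by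
    rw [h3L]; linear_combination (-1/2 : ℝ) * hdR
  have e2 : 3 * ((3 : ℝ) ^ L - 3) / 2 = 3 * (n : ℝ) - 3 := by rw [h3L]; ring
  have e3 : ((3 : ℝ) ^ L - 3) / 2 + 1 = (n : ℝ) := by rw [h3L]; ring
  rw [e1, e2, e3]
  have p1 : (2 : ℝ) ^ ((d : ℝ) - 3) = 2 ^ d / 8 := by
    rw [Real.rpow_sub (by norm_num : (0:ℝ) < 2), Real.rpow_natCast]
    rw [show (3:ℝ) = ((3:ℕ):ℝ) by norm_num, Real.rpow_natCast]
    norm_num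
  have p2 : (2 : ℝ) ^ (3 * (n : ℝ) - 3) = 2 ^ (3 * n) / 8 := by
    rw [Real.rpow_sub (by norm_num : (0:ℝ) < 2)]
    rw [show 3 * (n : ℝ) = ((3 * n : ℕ) : ℝ) by push_cast; ring, Real.rpow_natCast]
    rw [show (3:ℝ) = ((3:ℕ):ℝ) by norm_num, Real.rpow_natCast]
    norm_num
  have p3 : (2 : ℝ) ^ ((n : ℝ)) = 2 ^ n := Real.rpow_natCast 2 n
  rw [p1, p2, p3]
  linear_combination (1/48 : ℝ) * hR
end

section
/- For all x ≥ e, the principal branch of the Lambert W function satisfies W(x) ≥ ln(x) − ln(ln(x)) + ln(ln(x))/(2·ln(x)). -/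
/-- Hoorfar–Hassani lower bound on the principal branch of the Lambert W
function: for all `x ≥ e`,
`W(x) ≥ ln x - ln (ln x) + ln (ln x) / (2 ln x)`. Here `y = W(x)` is
characterized as the unique `y > 0` with `y * exp y = x`. -/
theorem lambertW_lower_bound (x y : ℝ) (hx : Real.exp 1 ≤ x)
    (hy : 0 < y) (hxy : y * Real.exp y = x) :
    Real.log x - Real.log (Real.log x) +
      Real.log (Real.log x) / (2 * Real.log x) ≤ y := by
  have hx0 : 0 < x := lt_of_lt_of_le (Real.exp_pos 1) hx
  set L := Real.log x with hL
  have hL1 : 1 ≤ L := by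
    calc (1 : ℝ) = Real.log (Real.exp 1) := (Real.log_exp 1).symm
      _ ≤ L := Real.log_le_log (Real.exp_pos 1) hx
  have hLpos : 0 < L := lt_of_lt_of_le one_pos hL1
  set M := Real.log L with hM
  have hM0 : 0 ≤ M := Real.log_nonneg hL1
  set t := M / (2 * L) with ht
  have ht0 : 0 ≤ t := div_nonneg hM0 (by linarith)
  set c := L - M + t with hc
  have hLt : L * t = M / 2 := by
    rw [ht]; field_simp
  have key : c ≤ L * Real.exp (-t) := by
    have h1 : 1 - t ≤ Real.exp (-t) := by
      have := Real.add_one_le_exp (-t); linarith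
    have h2 : L * (1 - t) ≤ L * Real.exp (-t) :=
      mul_le_mul_of_nonneg_left h1 (le_of_lt hLpos)
    have htM : t ≤ M / 2 := by
      rw [ht, div_le_div_iff₀ (by linarith) (by norm_num)]
      nlinarith
    nlinarith
  have hexpM : Real.exp M = L := Real.exp_log hLpos
  have hexpL : Real.exp L = x := Real.exp_log hx0
  by_cases hc0 : c ≤ 0
  · linarith
  push_neg at hc0
  have hcx : c * Real.exp c ≤ y * Real.exp y := by
    rw [hxy]
    calc c * Real.exp c ≤ L * Real.exp (-t) * Real.exp c :=
        mul_le_mul_of_nonneg_right key (le_of_lt (Real.exp_pos c))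
      _ = Real.exp M * Real.exp (-t) * Real.exp c := by rw [hexpM]
      _ = Real.exp (M + -t + c) := by rw [← Real.exp_add, ← Real.exp_add]
      _ = Real.exp L := by rw [hc]; ring_nf
      _ = x := hexpL
  by_contra hcon
  push_neg at hcon
  have : y * Real.exp y < c * Real.exp c :=
    mul_lt_mul hcon (Real.exp_le_exp.2 hcon.le) (Real.exp_pos y) hc0.le
  linarith
end

section
/- Suppose for each j = 1,...,n and each branch i the probability expression B_{k_j^i} (a sum over input sequences of probabilities of a fixed deterministic output assignment of length L) is bounded by C_{k_j^i} for correlations realizable in dimension d, and the correlations satisfy the factorization p(a_1...a_{nL}|x_1...x_{nL}) = ∏_{j=1}^n p(a_{(j−1)L+1}...a_{jL} | past; x_1...x_{jL}) with each conditional block bounded by C_j := max_i C_{k_j^i}. Then the concatenated expression B_k := ∑_{x_1,...,x_{nL}} p(ã_1[x_1], ..., ã_{nL}[x_1,...,x_{nL}] | x_1,...,x_{nL}) satisfies B_k ≤ ∏_{j=1}^n C_j. -/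
open Finset

private theorem concat_aux (L S : ℕ) (hS : 1 ≤ S) :
    ∀ (n : ℕ) (q : Fin n → (Fin n → (Fin L → Fin S)) → ℝ) (C : Fin n → ℝ),
    (∀ j x, 0 ≤ q j x) →
    (∀ (j : Fin n) (x x' : Fin n → (Fin L → Fin S)),
      (∀ j' : Fin n, j' ≤ j → x j' = x' j') → q j x = q j x') →
    (∀ (j : Fin n) (x : Fin n → (Fin L → Fin S)),
      ∑ y : Fin L → Fin S, q j (Function.update x j y) ≤ C j) →
    ∑ x : Fin n → (Fin L → Fin S), ∏ j : Fin n, q j x ≤ ∏ j : Fin n, C j := by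
  intro n
  induction n with
  | zero => intro q C _ _ _; simp
  | succ n ih =>
    intro q C hnonneg hdep hblock
    have hy0 : (Fin L → Fin S) := fun _ => ⟨0, hS⟩
    -- reindex the sum via snoc
    have hsum : ∑ x : Fin (n+1) → Fin L → Fin S, ∏ j, q j x
        = ∑ p : (Fin L → Fin S) × (Fin n → (Fin L → Fin S)), ∏ j, q j (Fin.snoc p.2 p.1) := by
      exact (Fintype.sum_equiv (Fin.snocEquiv (fun _ => (Fin L → Fin S))) _ _ (fun p => rfl)).symm
    rw [hsum, Fintype.sum_prod_type_right]
    -- define q' on n blocks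
    set q' : Fin n → (Fin n → (Fin L → Fin S)) → ℝ :=
      fun j x => q j.castSucc (Fin.snoc x hy0) with hq'
    have hsplit : ∀ (x' : Fin n → Fin L → Fin S) (y : Fin L → Fin S),
        ∏ j : Fin (n+1), q j (Fin.snoc x' y)
          = (∏ j : Fin n, q' j x') * q (Fin.last n) (Fin.snoc x' y) := by
      intro x' y
      rw [Fin.prod_univ_castSucc]
      congr 1
      refine Finset.prod_congr rfl fun j _ => ?_
      refine hdep _ _ _ fun j' hj' => ?_
      have hne : j' ≠ Fin.last n :=
        Fin.ne_last_of_lt (lt_of_le_of_lt hj' (Fin.castSucc_lt_last j))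
      obtain ⟨i, rfl⟩ := Fin.exists_castSucc_eq.mpr hne
      simp [Fin.snoc_castSucc]
    calc ∑ x' : Fin n → Fin L → Fin S, ∑ y : Fin L → Fin S, ∏ j : Fin (n+1), q j (Fin.snoc x' y)
        = ∑ x' : Fin n → Fin L → Fin S, (∏ j : Fin n, q' j x') * ∑ y : Fin L → Fin S, q (Fin.last n) (Fin.snoc x' y) := by
          refine Finset.sum_congr rfl fun x' _ => ?_
          rw [Finset.mul_sum]
          exact Finset.sum_congr rfl fun y _ => hsplit x' y
      _ ≤ ∑ x' : Fin n → Fin L → Fin S, (∏ j : Fin n, q' j x') * C (Fin.last n) := by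
          refine Finset.sum_le_sum fun x' _ => ?_
          refine mul_le_mul_of_nonneg_left ?_ (Finset.prod_nonneg fun j _ => hnonneg _ _)
          have := hblock (Fin.last n) (Fin.snoc x' hy0)
          calc ∑ y : Fin L → Fin S, q (Fin.last n) (Fin.snoc x' y)
              = ∑ y : Fin L → Fin S, q (Fin.last n) (Function.update (Fin.snoc x' hy0) (Fin.last n) y) := by
                refine Finset.sum_congr rfl fun y _ => ?_
                rw [Fin.update_snoc_last]
            _ ≤ C (Fin.last n) := this
      _ = (∑ x' : Fin n → Fin L → Fin S, ∏ j : Fin n, q' j x') * C (Fin.last n) := by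
          rw [Finset.sum_mul]
      _ ≤ (∏ j : Fin n, C j.castSucc) * C (Fin.last n) := by
          have hClast : 0 ≤ C (Fin.last n) := by
            refine le_trans ?_ (hblock (Fin.last n) (Fin.snoc (fun _ => hy0) hy0))
            exact Finset.sum_nonneg fun y _ => hnonneg _ _
          refine mul_le_mul_of_nonneg_right ?_ hClast
          refine ih q' (fun j => C j.castSucc) (fun j x => hnonneg _ _) ?_ ?_
          · intro j x x' h
            refine hdep _ _ _ fun j' hj' => ?_
            have hne : j' ≠ Fin.last n :=
              Fin.ne_last_of_lt (lt_of_le_of_lt hj' (Fin.castSucc_lt_last j))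
            obtain ⟨i, rfl⟩ := Fin.exists_castSucc_eq.mpr hne
            simp only [Fin.snoc_castSucc]
            exact h i (by exact_mod_cast hj')
          · intro j x
            have := hblock j.castSucc (Fin.snoc x hy0)
            calc ∑ y : Fin L → Fin S, q' j (Function.update x j y)
                = ∑ y : Fin L → Fin S, q j.castSucc (Function.update (Fin.snoc x hy0) j.castSucc y) := by
                  refine Finset.sum_congr rfl fun y _ => ?_
                  show q j.castSucc (Fin.snoc (Function.update x j y) hy0) = _
                  rw [Fin.snoc_update]
              _ ≤ C j.castSucc := this
      _ = ∏ j : Fin (n+1), C j := (Fin.prod_univ_castSucc C).symm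

/-- Concatenation of temporal inequalities. An input sequence of length `n·L`
is modelled as `n` blocks of `L` inputs, `x : Fin n → Fin L → Fin S`.
For each block `j`, `q j x` is the conditional probability (given the past)
of the prescribed deterministic outputs of block `j` on inputs `x`; by the
arrow-of-time factorization, the probability of the full prescribed output
sequence is `∏ j, q j x`. Assume:
* each `q j x` is nonnegative;
* `q j x` depends only on the inputs of blocks `≤ j`;
* block bound: for every `j` and every choice of the other blocks, the sum
  over the `S^L` input sequences of block `j` satisfies
  `∑_y q j (x[j := y]) ≤ C j`.
Then the concatenated expression
`B = ∑_x p(ã₁[x₁],…,ã_{nL}[x₁,…,x_{nL}] | x₁,…,x_{nL}) = ∑_x ∏ j, q j x`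
satisfies `B ≤ ∏ j, C j`. -/
theorem concatenated_temporal_inequality (n L S : ℕ) (hL : 1 ≤ L) (hS : 1 ≤ S)
    (q : Fin n → (Fin n → (Fin L → Fin S)) → ℝ) (C : Fin n → ℝ)
    (hnonneg : ∀ j x, 0 ≤ q j x)
    (hdep : ∀ (j : Fin n) (x x' : Fin n → (Fin L → Fin S)),
      (∀ j' : Fin n, j' ≤ j → x j' = x' j') → q j x = q j x')
    (hblock : ∀ (j : Fin n) (x : Fin n → (Fin L → Fin S)),
      ∑ y : Fin L → Fin S, q j (Function.update x j y) ≤ C j) :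
    ∑ x : Fin n → (Fin L → Fin S), ∏ j : Fin n, q j x ≤ ∏ j : Fin n, C j := by
  exact concat_aux L S hS n q C hnonneg hdep hblock
end
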